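/- One-epoch preliminary descent of mirror descent with incremental gradients: Let E be a finite-dimensional real inner product space, n ≥ 1, and let f_1, …, f_n : E → ℝ be differentiable with f := (1/n)·Σ_{i=1}^n f_i. Let X ⊆ E, let h satisfy the mirror hypotheses on X with Hessian bounds 0 < μ_X ≤ 𝓛_X, and let κ ≥ 𝓛_X/μ_X. Let L > 0, α > 0 with α ≤ 1/(2nL), and suppose the extended descent inequality f(u) − f(v) − ⟨∇f(v), u − v⟩ ≤ L·D_h(u, v) holds for all u, v ∈ X. Let σ be a permutation of {1, …, n} and let points y¹, …, y^{n+1} ∈ X satisfy y¹ = x and ∇h(y^{i+1}) = ∇h(y^i) − α·∇f_{σ(i)}(y^i) for i = 1, …, n, with x ∈ X and x′ := y^{n+1} ∈ X. Then f(x′) + D_h(x, x′)/(2nα) ≤ f(x) + (κ·α)/(2μ_X)·Σ_{i=1}^n ‖∇f_{σ(i)}(x) − ∇f_{σ(i)}(y^i)‖². -/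

import Mathlib

open RealInnerProductSpace

/-- The mirror hypotheses for a kernel `h` with gradient `h'` and Hessian `h''`
on a set `X`: `h` is twice continuously differentiable on an open set containing `X`,
the image `h' '' X` is convex, and there is a continuously differentiable local inverse
`gstar` of the mirror map `h'`, defined on an open set containing `h' '' X`, mapping the
convex hull of `h' '' X` into `X`. -/
structure MirrorHyp {E : Type*} [NormedAddCommGroup E] [InnerProductSpace ℝ E]
    [CompleteSpace E] (h : E → ℝ) (h' : E → E) (h'' : E → E →L[ℝ] E) (X : Set E) where
  U : Set E
  isOpen_U : IsOpen U
  subset_U : X ⊆ U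
  grad : ∀ x ∈ U, HasGradientAt h (h' x) x
  hess : ∀ x ∈ U, HasFDerivAt h' (h'' x) x
  hess_cont : ContinuousOn h'' U
  img_convex : Convex ℝ (h' '' X)
  gstar : E → E
  V : Set E
  isOpen_V : IsOpen V
  img_subset_V : h' '' X ⊆ V
  gstar_contDiff : ContDiffOn ℝ 1 gstar V
  gstar_rightInv : ∀ w ∈ V, h' (gstar w) = w
  gstar_leftInv : ∀ x ∈ X, gstar (h' x) = x
  gstar_maps : ∀ w ∈ convexHull ℝ (h' '' X), gstar w ∈ X

theorem hess_symm {E : Type*} [NormedAddCommGroup E] [InnerProductSpace ℝ E] [CompleteSpace E]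
    {h : E → ℝ} {h' : E → E} {h'' : E → E →L[ℝ] E} {X : Set E}
    (mh : MirrorHyp h h' h'' X)
    (u : E) (hu : u ∈ mh.U) (v w : E) : ⟪h'' u v, w⟫ = ⟪h'' u w, v⟫ := by
  set D : E →L[ℝ] (E →L[ℝ] ℝ) :=
    (InnerProductSpace.toDual ℝ E).toContinuousLinearEquiv.toContinuousLinearMap with hD
  have hf : ∀ᶠ y in nhds u, HasFDerivAt h (D (h' y)) y := by
    filter_upwards [mh.isOpen_U.eventually_mem hu] with y hy
    exact (mh.grad y hy).hasFDerivAt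
  have hx : HasFDerivAt (fun y => D (h' y)) (D.comp (h'' u)) u :=
    D.hasFDerivAt.comp u (mh.hess u hu)
  have := second_derivative_symmetric_of_eventually hf hx v w
  simpa [hD, InnerProductSpace.toDual_apply_apply] using this

theorem quad_cs {E : Type*} [NormedAddCommGroup E] [InnerProductSpace ℝ E]
    (H : E →L[ℝ] E) (μ 𝓛 : ℝ) (hμ : 0 < μ)
    (hsym : ∀ v w : E, ⟪H v, w⟫ = ⟪H w, v⟫)
    (hlo : ∀ v : E, μ * ‖v‖ ^ 2 ≤ ⟪H v, v⟫)
    (hup : ∀ v : E, ⟪H v, v⟫ ≤ 𝓛 * ‖v‖ ^ 2)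
    (u : E) : ‖H u‖ ^ 2 ≤ 𝓛 * ⟪H u, u⟫ := by
  have hpos : ∀ v : E, (0:ℝ) ≤ ⟪H v, v⟫ := fun v =>
    le_trans (by positivity) (hlo v)
  have CS : ∀ a b : E, ⟪H a, b⟫ ^ 2 ≤ ⟪H a, a⟫ * ⟪H b, b⟫ := by
    intro a b
    have key : ∀ t : ℝ, 0 ≤ ⟪H b, b⟫ * (t * t) + (2 * ⟪H a, b⟫) * t + ⟪H a, a⟫ := by
      intro t
      have h0 := hpos (a + t • b)
      have he : ⟪H (a + t • b), a + t • b⟫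
          = ⟪H b, b⟫ * (t * t) + (2 * ⟪H a, b⟫) * t + ⟪H a, a⟫ := by
        rw [map_add, map_smul]
        simp only [inner_add_left, inner_add_right, inner_smul_left, inner_smul_right,
          ContinuousLinearMap.coe_smul', Pi.smul_apply, smul_eq_mul, conj_trivial]
        rw [hsym b a]
        ring
      linarith [he ▸ h0]
    have hd := discrim_le_zero key
    rw [discrim] at hd
    nlinarith
  have h1 := CS u (H u)
  have h2 := hup (H u)
  have h3 : ⟪H u, H u⟫ = ‖H u‖ ^ 2 := real_inner_self_eq_norm_sq (H u)
  rcases eq_or_lt_of_le (norm_nonneg (H u)) with hz | hz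
  · have hz0 : H u = 0 := norm_eq_zero.mp hz.symm
    simp [hz0]
  · nlinarith [hpos u, mul_pos hz hz]

/-- key Bregman lemma -/
theorem breg_bounds {E : Type*} [NormedAddCommGroup E] [InnerProductSpace ℝ E] [CompleteSpace E]
    {h : E → ℝ} {h' : E → E} {h'' : E → E →L[ℝ] E} {X : Set E}
    (mh : MirrorHyp h h' h'' X)
    (μX 𝓛X : ℝ) (hμX : 0 < μX) (hμ𝓛 : μX ≤ 𝓛X)
    (hbound : ∀ u ∈ X, ∀ v : E,
      μX * ‖v‖ ^ 2 ≤ ⟪h'' u v, v⟫ ∧ ⟪h'' u v, v⟫ ≤ 𝓛X * ‖v‖ ^ 2)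
    (a : E) (ha : a ∈ X) (b : E) (hb : b ∈ X) :
    ‖a - b‖ ≤ ‖h' a - h' b‖ / μX ∧
      ‖h' a - h' b‖ ^ 2 / (2 * 𝓛X) ≤ h a - h b - ⟪h' b, a - b⟫ := by
  have h𝓛 : 0 < 𝓛X := lt_of_lt_of_le hμX hμ𝓛
  set v : E := h' a - h' b with hv
  set c : ℝ → E := fun t => h' b + t • v with hc
  -- segment is in the image
  have hseg : ∀ t ∈ Set.Icc (0:ℝ) 1, c t ∈ h' '' X := by
    intro t ht
    have := mh.img_convex (Set.mem_image_of_mem h' hb) (Set.mem_image_of_mem h' ha)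
      (a := 1 - t) (b := t) (by linarith [ht.1, ht.2]) ht.1 (by ring)
    convert this using 1
    simp only [hc, hv]
    module
  have hcV : ∀ t ∈ Set.Icc (0:ℝ) 1, c t ∈ mh.V := fun t ht => mh.img_subset_V (hseg t ht)
  set γ : ℝ → E := fun t => mh.gstar (c t) with hγ
  have hγX : ∀ t ∈ Set.Icc (0:ℝ) 1, γ t ∈ X := by
    intro t ht
    exact mh.gstar_maps _ (by rw [mh.img_convex.convexHull_eq]; exact hseg t ht)
  have hγ0 : γ 0 = b := by
    simp only [hγ, hc, zero_smul, add_zero]; exact mh.gstar_leftInv b hb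
  have hγ1 : γ 1 = a := by
    have : c 1 = h' a := by simp [hc, hv]
    show mh.gstar (c 1) = a
    rw [this]; exact mh.gstar_leftInv a ha
  -- derivative of γ
  set A : ℝ → (E →L[ℝ] E) := fun t => fderiv ℝ mh.gstar (c t) with hA
  have hgd : ∀ t ∈ Set.Icc (0:ℝ) 1, HasFDerivAt mh.gstar (A t) (c t) := by
    intro t ht
    have : DifferentiableAt ℝ mh.gstar (c t) :=
      (mh.gstar_contDiff.differentiableOn one_ne_zero).differentiableAt
        (mh.isOpen_V.mem_nhds (hcV t ht))
    exact this.hasFDerivAt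
  have hcd : ∀ t : ℝ, HasDerivAt c v t := by
    intro t
    simpa [hc] using ((hasDerivAt_id t).smul_const v).const_add (h' b)
  have hγd : ∀ t ∈ Set.Icc (0:ℝ) 1, HasDerivAt γ (A t v) t := by
    intro t ht
    exact (hgd t ht).comp_hasDerivAt t (hcd t)
  -- inverse identity
  have hHA : ∀ t ∈ Set.Icc (0:ℝ) 1, ∀ z : E, h'' (γ t) (A t z) = z := by
    intro t ht z
    have hU : γ t ∈ mh.U := mh.subset_U (hγX t ht)
    have h1 : HasFDerivAt (h' ∘ mh.gstar) ((h'' (γ t)).comp (A t)) (c t) :=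
      (mh.hess (γ t) hU).comp (c t) (hgd t ht)
    have heq : h' ∘ mh.gstar =ᶠ[nhds (c t)] id := by
      filter_upwards [mh.isOpen_V.eventually_mem (hcV t ht)] with z hz
      exact mh.gstar_rightInv z hz
    have h2 : HasFDerivAt (h' ∘ mh.gstar) (ContinuousLinearMap.id ℝ E) (c t) :=
      (hasFDerivAt_id (c t)).congr_of_eventuallyEq heq
    have := h1.unique h2
    calc h'' (γ t) (A t z) = ((h'' (γ t)).comp (A t)) z := rfl
      _ = z := by rw [this]; rfl
  -- norm bound on A t v
  have hAv : ∀ t ∈ Set.Icc (0:ℝ) 1, ‖A t v‖ ≤ ‖v‖ / μX := by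
    intro t ht
    set u := A t v with hu
    have hHu : h'' (γ t) u = v := hHA t ht v
    have hlo := (hbound (γ t) (hγX t ht) u).1
    rw [hHu] at hlo
    have hvu : ⟪v, u⟫ ≤ ‖v‖ * ‖u‖ := real_inner_le_norm v u
    rcases eq_or_lt_of_le (norm_nonneg u) with hz | hz
    · rw [← hz]; positivity
    · rw [le_div_iff₀ hμX]
      nlinarith
  -- first claim
  constructor
  · have := norm_image_sub_le_of_norm_deriv_le_segment'
      (f := γ) (f' := fun t => A t v) (C := ‖v‖ / μX)
      (fun t ht => (hγd t ht).hasDerivWithinAt)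
      (fun t ht => hAv t (Set.mem_Icc_of_Ico ht)) 1 (Set.right_mem_Icc.2 zero_le_one)
    rw [hγ1, hγ0] at this
    simpa using this
  · -- second claim
    have hquad : ∀ t ∈ Set.Icc (0:ℝ) 1, ‖v‖ ^ 2 / 𝓛X ≤ ⟪v, A t v⟫ := by
      intro t ht
      set u := A t v with hu
      have hHu : h'' (γ t) u = v := hHA t ht v
      have hX : γ t ∈ X := hγX t ht
      have hcs := quad_cs (h'' (γ t)) μX 𝓛X hμX
        (hess_symm mh (γ t) (mh.subset_U hX))
        (fun z => (hbound (γ t) hX z).1) (fun z => (hbound (γ t) hX z).2) u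
      rw [hHu] at hcs
      rw [div_le_iff₀ h𝓛, mul_comm]
      exact hcs
    -- monotone function argument
    set φ : ℝ → ℝ := fun t => h (γ t) - ⟪h' b, γ t⟫ - t ^ 2 * (‖v‖ ^ 2 / (2 * 𝓛X)) with hφ
    have hφd : ∀ t ∈ Set.Icc (0:ℝ) 1,
        HasDerivAt φ (t * ⟪v, A t v⟫ - t * (‖v‖ ^ 2 / 𝓛X)) t := by
      intro t ht
      have hU : γ t ∈ mh.U := mh.subset_U (hγX t ht)
      have h1 : HasDerivAt (fun t => h (γ t)) (⟪h' (γ t), A t v⟫) t := by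
        have := ((mh.grad (γ t) hU).hasFDerivAt).comp_hasDerivAt t (hγd t ht)
        simp [InnerProductSpace.toDual_apply_apply] at this
        exact this
      have h1' : ⟪h' (γ t), A t v⟫ = t * ⟪v, A t v⟫ + ⟪h' b, A t v⟫ := by
        have : h' (γ t) = c t := mh.gstar_rightInv (c t) (hcV t ht)
        rw [this, hc]
        simp only [inner_add_left, real_inner_smul_left]
        ring
      have h2 : HasDerivAt (fun t => ⟪h' b, γ t⟫) (⟪h' b, A t v⟫) t := by
        have := (innerSL ℝ (h' b)).hasFDerivAt.comp_hasDerivAt t (hγd t ht)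
        simp at this
        exact this
      have h3 : HasDerivAt (fun t : ℝ => t ^ 2 * (‖v‖ ^ 2 / (2 * 𝓛X)))
          (2 * t * (‖v‖ ^ 2 / (2 * 𝓛X))) t := by
        simpa [mul_comm] using (hasDerivAt_pow 2 t).mul_const (‖v‖ ^ 2 / (2 * 𝓛X))
      have := (h1.sub h2).sub h3
      refine this.congr_deriv ?_
      rw [h1']
      ring
    have hmono : MonotoneOn φ (Set.Icc (0:ℝ) 1) := by
      apply monotoneOn_of_hasDerivWithinAt_nonneg (convex_Icc 0 1)
        (f' := fun t => t * ⟪v, A t v⟫ - t * (‖v‖ ^ 2 / 𝓛X))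
      · intro t ht
        exact (hφd t ht).continuousAt.continuousWithinAt
      · intro t ht
        rw [interior_Icc] at ht
        exact (hφd t (Set.mem_Icc_of_Ioo ht)).hasDerivWithinAt
      · intro t ht
        rw [interior_Icc] at ht
        have := hquad t (Set.mem_Icc_of_Ioo ht)
        have ht0 : 0 ≤ t := ht.1.le
        nlinarith
    have := hmono (Set.left_mem_Icc.2 zero_le_one) (Set.right_mem_Icc.2 zero_le_one) zero_le_one
    simp only [hφ, hγ0, hγ1] at this
    have hexp : ⟪h' b, a - b⟫ = ⟪h' b, a⟫ - ⟪h' b, b⟫ := inner_sub_right _ _ _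
    norm_num at this
    linarith

set_option maxHeartbeats 2000000 in
/-- **One-epoch preliminary descent of mirror descent with incremental gradients.**
Starting from `x = y 0 ∈ X`, one epoch of mirror descent through the data in the order
given by a permutation `σ`, i.e. `∇h (y (i+1)) = ∇h (y i) - α • ∇f_{σ i} (y i)`,
ends at `x' = y n` and satisfies
`f x' + D_h(x, x')/(2 n α) ≤ f x + (κ α)/(2 μX) * Σ_i ‖∇f_{σ i} x - ∇f_{σ i} (y i)‖²`,
provided `α ≤ 1/(2 n L)`, the extended descent inequality holds on `X`, the iterates
stay in `X`, and the kernel Hessian bounds `0 < μX ≤ 𝓛X` with `κ ≥ 𝓛X/μX` hold. -/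
theorem one_epoch_preliminary_descent
    {E : Type*} [NormedAddCommGroup E] [InnerProductSpace ℝ E] [FiniteDimensional ℝ E]
    (n : ℕ) (hn : 1 ≤ n)
    (fs : Fin n → E → ℝ) (fs' : Fin n → E → E)
    (hfsgrad : ∀ i : Fin n, ∀ x : E, HasGradientAt (fs i) (fs' i x) x)
    (f : E → ℝ) (f' : E → E)
    (hfdef : ∀ u : E, f u = (1 / (n : ℝ)) * ∑ i : Fin n, fs i u)
    (hf'def : ∀ u : E, f' u = (1 / (n : ℝ)) • ∑ i : Fin n, fs' i u)
    (X : Set E) (h : E → ℝ) (h' : E → E) (h'' : E → E →L[ℝ] E)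
    (mh : MirrorHyp h h' h'' X)
    (μX 𝓛X : ℝ) (hμX : 0 < μX) (hμ𝓛 : μX ≤ 𝓛X)
    (hbound : ∀ u ∈ X, ∀ v : E,
      μX * ‖v‖ ^ 2 ≤ ⟪h'' u v, v⟫ ∧ ⟪h'' u v, v⟫ ≤ 𝓛X * ‖v‖ ^ 2)
    (κ : ℝ) (hκ : 𝓛X / μX ≤ κ)
    (L α : ℝ) (hL : 0 < L) (hα : 0 < α) (hαL : α ≤ 1 / (2 * n * L))
    (hdescent : ∀ u ∈ X, ∀ v ∈ X,
      f u - f v - ⟪f' v, u - v⟫ ≤ L * (h u - h v - ⟪h' v, u - v⟫))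
    (σ : Equiv.Perm (Fin n)) (x : E) (hx : x ∈ X)
    (y : ℕ → E) (hy0 : y 0 = x)
    (hyX : ∀ i : ℕ, i ≤ n → y i ∈ X)
    (hupd : ∀ i : Fin n,
      h' (y ((i : ℕ) + 1)) = h' (y (i : ℕ)) - α • fs' (σ i) (y (i : ℕ))) :
    f (y n) + (h x - h (y n) - ⟪h' (y n), x - y n⟫) / (2 * n * α) ≤
      f x + (κ * α) / (2 * μX) *
        ∑ i : Fin n, ‖fs' (σ i) x - fs' (σ i) (y (i : ℕ))‖ ^ 2 := by
  classical
  have hx' : y n ∈ X := hyX n le_rfl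
  set x' : E := y n with hx'def
  set N : ℝ := (n : ℝ) with hNdef
  have hN : (1:ℝ) ≤ N := by rw [hNdef]; exact_mod_cast hn
  have hN0 : (0:ℝ) < N := lt_of_lt_of_le one_pos hN
  have h𝓛 : (0:ℝ) < 𝓛X := lt_of_lt_of_le hμX hμ𝓛
  have hκ1 : (1:ℝ) ≤ κ := le_trans ((one_le_div hμX).mpr hμ𝓛) hκ
  have hκ0 : (0:ℝ) < κ := lt_of_lt_of_le one_pos hκ1
  have hκμ : 𝓛X ≤ κ * μX := by
    rw [div_le_iff₀ hμX] at hκ; exact hκ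
  -- telescoping the dual updates
  set g : ℕ → E := fun i => if hi : i < n then fs' (σ ⟨i, hi⟩) (y i) else 0 with hgdef
  have tele : ∀ k, k ≤ n → h' (y k) = h' x - α • ∑ i ∈ Finset.range k, g i := by
    intro k
    induction k with
    | zero => intro _; simp [hy0]
    | succ k ih =>
      intro hk
      have hk' : k < n := hk
      have := hupd ⟨k, hk'⟩
      simp only [Fin.val_mk] at this
      rw [this, ih (le_of_lt hk'), Finset.sum_range_succ, smul_add]
      have hg : g k = fs' (σ ⟨k, hk'⟩) (y k) := dif_pos hk'
      rw [hg]
      abel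
  have hsum_g : ∑ i ∈ Finset.range n, g i = ∑ i : Fin n, fs' (σ i) (y (i : ℕ)) := by
    rw [← Fin.sum_univ_eq_sum_range g n]
    apply Finset.sum_congr rfl
    intro i _
    simp only [hgdef, dif_pos i.isLt, Fin.eta]
  set G : E := ∑ i : Fin n, fs' (σ i) (y (i : ℕ)) with hGdef
  have hw : h' x - h' x' = α • G := by
    have := tele n le_rfl
    rw [hsum_g] at this
    rw [← hx'def] at this
    rw [this]; abel
  -- abbreviations
  set D1 : ℝ := h x - h x' - ⟪h' x', x - x'⟫ with hD1def
  set D2 : ℝ := h x' - h x - ⟪h' x, x' - x⟫ with hD2def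
  set s : ℝ := ‖h' x - h' x'‖ with hsdef
  set S : ℝ := ∑ i : Fin n, ‖fs' (σ i) x - fs' (σ i) (y (i : ℕ))‖ ^ 2 with hSdef
  set T : ℝ := ∑ i : Fin n, ⟪fs' (σ i) x - fs' (σ i) (y (i : ℕ)), x' - x⟫ with hTdef
  have hS0 : 0 ≤ S := Finset.sum_nonneg fun i _ => by positivity
  -- Bregman bounds
  have b1 := breg_bounds mh μX 𝓛X hμX hμ𝓛 hbound x hx x' hx'
  have b2 := breg_bounds mh μX 𝓛X hμX hμ𝓛 hbound x' hx' x hx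
  have hs' : ‖h' x' - h' x‖ = s := by rw [hsdef]; exact norm_sub_rev _ _
  rw [hs'] at b2
  have hD1 : s ^ 2 / (2 * 𝓛X) ≤ D1 := b1.2
  have hD2 : s ^ 2 / (2 * 𝓛X) ≤ D2 := b2.2
  have hD20 : 0 ≤ D2 := le_trans (by positivity) hD2
  have hxx' : ‖x' - x‖ ≤ s / μX := b2.1
  -- descent inequality
  have hd : f x' - f x - ⟪f' x, x' - x⟫ ≤ L * D2 := hdescent x' hx' x hx
  -- gradient decomposition
  have hf'x : ⟪f' x, x' - x⟫ = (1 / N) * (⟪G, x' - x⟫ + T) := by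
    rw [hf'def x, real_inner_smul_left, sum_inner]
    congr 1
    rw [← Equiv.sum_comp σ (fun i => ⟪fs' i x, x' - x⟫)]
    rw [hGdef, sum_inner, hTdef, ← Finset.sum_add_distrib]
    apply Finset.sum_congr rfl
    intro i _
    rw [← inner_add_left]
    congr 1
    abel
  -- dual product identity
  have hG : α * ⟪G, x' - x⟫ = -(D1 + D2) := by
    have : ⟪h' x - h' x', x' - x⟫ = α * ⟪G, x' - x⟫ := by
      rw [hw, real_inner_smul_left]
    rw [← this, hD1def, hD2def]
    simp only [inner_sub_left, inner_sub_right]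
    ring
  -- Young's inequality term by term
  set c : ℝ := N * κ * α / μX with hcdef
  have hc : 0 < c := by positivity
  have hT : T ≤ (c / 2) * S + N * (s ^ 2 / (2 * c * μX ^ 2)) := by
    have point : ∀ i : Fin n, ⟪fs' (σ i) x - fs' (σ i) (y (i : ℕ)), x' - x⟫ ≤
        (c / 2) * ‖fs' (σ i) x - fs' (σ i) (y (i : ℕ))‖ ^ 2 + s ^ 2 / (2 * c * μX ^ 2) := by
      intro i
      set d : E := fs' (σ i) x - fs' (σ i) (y (i : ℕ)) with hddef
      have h1 : ⟪d, x' - x⟫ ≤ ‖d‖ * ‖x' - x‖ := real_inner_le_norm d _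
      have h2 : ‖d‖ * ‖x' - x‖ ≤ ‖d‖ * (s / μX) :=
        mul_le_mul_of_nonneg_left hxx' (norm_nonneg d)
      have h3 : ‖d‖ * (s / μX) ≤ (c / 2) * ‖d‖ ^ 2 + s ^ 2 / (2 * c * μX ^ 2) := by
        have hkey : (c / 2) * ‖d‖ ^ 2 + s ^ 2 / (2 * c * μX ^ 2) - ‖d‖ * (s / μX)
            = (c * ‖d‖ - s / μX) ^ 2 / (2 * c) := by
          field_simp
          ring
        have hnn : 0 ≤ (c * ‖d‖ - s / μX) ^ 2 / (2 * c) := by positivity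
        linarith [hkey ▸ hnn]
      linarith
    calc T ≤ ∑ i : Fin n, ((c / 2) * ‖fs' (σ i) x - fs' (σ i) (y (i : ℕ))‖ ^ 2 +
        s ^ 2 / (2 * c * μX ^ 2)) := Finset.sum_le_sum fun i _ => point i
      _ = (c / 2) * S + N * (s ^ 2 / (2 * c * μX ^ 2)) := by
        rw [Finset.sum_add_distrib, ← Finset.mul_sum, Finset.sum_const, Finset.card_univ,
          Fintype.card_fin, nsmul_eq_mul, hSdef, hNdef]
  -- put everything over the common scale e = 1/(2 N α)
  set e : ℝ := 1 / (2 * N * α) with hedef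
  have he : 0 < e := by positivity
  have hGdiv : (1 / N) * ⟪G, x' - x⟫ = -((D1 + D2) * (2 * e)) := by
    have hα' : α ≠ 0 := ne_of_gt hα
    have hN' : N ≠ 0 := ne_of_gt hN0
    rw [mul_comm] at hG
    have hip : ⟪G, x' - x⟫ = -(D1 + D2) / α := by
      rw [eq_div_iff hα']; exact hG
    rw [hip, hedef]
    field_simp
  have hTe : (1 / N) * T ≤ (κ * α / (2 * μX)) * S + (D1 + D2) * e := by
    have step1 : (1 / N) * T ≤ (1 / N) * ((c / 2) * S + N * (s ^ 2 / (2 * c * μX ^ 2))) :=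
      mul_le_mul_of_nonneg_left hT (by positivity)
    have step2 : (1 / N) * ((c / 2) * S + N * (s ^ 2 / (2 * c * μX ^ 2)))
        = (κ * α / (2 * μX)) * S + s ^ 2 / (2 * c * μX ^ 2) := by
      rw [hcdef]
      field_simp
    have step3 : s ^ 2 / (2 * c * μX ^ 2) ≤ (D1 + D2) * e := by
      have hD12 : 0 ≤ D1 + D2 := by
        have h0 : (0:ℝ) ≤ s ^ 2 / (2 * 𝓛X) := by positivity
        linarith
      have key1 : s ^ 2 ≤ 2 * 𝓛X * D1 := by
        rw [div_le_iff₀ (by positivity)] at hD1; linarith [hD1]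
      have key2 : s ^ 2 ≤ 2 * 𝓛X * D2 := by
        rw [div_le_iff₀ (by positivity)] at hD2; linarith [hD2]
      have key : s ^ 2 ≤ (D1 + D2) * 𝓛X := by nlinarith [key1, key2]
      have keyk : s ^ 2 ≤ (D1 + D2) * (κ * μX) :=
        key.trans (mul_le_mul_of_nonneg_left hκμ hD12)
      have hrw2 : (D1 + D2) * e * (2 * c * μX ^ 2) = (D1 + D2) * (κ * μX) := by
        rw [hedef, hcdef]
        field_simp
      rw [div_le_iff₀ (by positivity), hrw2]
      exact keyk
    linarith
  have hLD2 : L * D2 ≤ D2 * e := by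
    have h1 : α * (2 * N * L) ≤ 1 := by
      rw [← le_div_iff₀ (by positivity)]
      exact hαL
    have hrw : D2 * e = D2 / (2 * N * α) := by rw [hedef]; ring
    rw [hrw, le_div_iff₀ (by positivity)]
    linarith [mul_le_mul_of_nonneg_left h1 hD20]
  -- assemble
  have hgoal1 : (h x - h x' - ⟪h' x', x - x'⟫) / (2 * N * α) = D1 * e := by
    rw [← hD1def, hedef]; ring
  have hfin : f x' - f x - ((1 / N) * ⟪G, x' - x⟫ + (1 / N) * T) ≤ L * D2 := by
    rw [← mul_add, ← hf'x]; exact hd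
  calc f x' + (h x - h x' - ⟪h' x', x - x'⟫) / (2 * N * α)
      = f x' + D1 * e := by rw [hgoal1]
    _ ≤ f x + (κ * α) / (2 * μX) * S := by
        have c1 : f x' ≤ f x + (1 / N * ⟪G, x' - x⟫ + 1 / N * T) + L * D2 := by
          linarith only [hfin]
        have c3 : f x' ≤ f x + -((D1 + D2) * (2 * e)) + 1 / N * T + L * D2 := by
          linarith only [c1, hGdiv]
        have c4 : f x' ≤ f x + -((D1 + D2) * (2 * e)) + (κ * α / (2 * μX) * S + (D1 + D2) * e)
            + L * D2 := by
          linarith only [c3, hTe]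
        clear_value e D1 D2 S N x' G T s
        linarith only [c4, hLD2]
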